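/- arXiv:1602.05541 — 2 statements merged into one kernel-verified Lean document; each statement's English description precedes it below -/
import Mathlib

section
/- For α ∈ (1,2) and q ≥ 0, the integral ∫₀^∞ (e^{-qζ} - 1 + qζ) · (-1/(cos(πα/2)·Γ(-α)·ζ^{1+α})) dζ equals -q^α/cos(πα/2). -/
open Real MeasureTheory Set Filter

namespace Stmt0Aux

lemma one_sub_exp_neg_le (x : ℝ) (hx : 0 ≤ x) : 1 - Real.exp (-x) ≤ x := by
  nlinarith [Real.add_one_le_exp (-x)]

lemma one_sub_exp_neg_nonneg (x : ℝ) (hx : 0 ≤ x) : 0 ≤ 1 - Real.exp (-x) := by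
  have : Real.exp (-x) ≤ Real.exp 0 := Real.exp_le_exp.mpr (by linarith)
  simpa using this

lemma comp_nonneg (x : ℝ) : 0 ≤ Real.exp (-x) - 1 + x := by
  nlinarith [Real.add_one_le_exp (-x)]

lemma comp_le_sq (x : ℝ) (hx : 0 ≤ x) : Real.exp (-x) - 1 + x ≤ x ^ 2 := by
  have h1 : (1 + x) * Real.exp (-x) ≤ 1 := by
    rw [Real.exp_neg, mul_inv_le_iff₀ (Real.exp_pos x)]
    nlinarith [Real.add_one_le_exp x]
  nlinarith [one_sub_exp_neg_le x hx, mul_le_mul_of_nonneg_left (one_sub_exp_neg_le x hx) hx]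

lemma comp_le_self (x : ℝ) (hx : 0 ≤ x) : Real.exp (-x) - 1 + x ≤ x := by
  nlinarith [one_sub_exp_neg_nonneg x hx]

/-- Integrability from power bounds near `0` and near `∞`. -/
lemma integrableOn_of_bounds {f : ℝ → ℝ} {p r : ℝ} (hp : -1 < p) (hr : r < -1)
    (hm : AEStronglyMeasurable f (volume.restrict (Ioi 0)))
    (h1 : ∀ x ∈ Ioc (0:ℝ) 1, |f x| ≤ x ^ p)
    (h2 : ∀ x ∈ Ioi (1:ℝ), |f x| ≤ x ^ r) :
    IntegrableOn f (Ioi (0:ℝ)) := by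
  rw [← Ioc_union_Ioi_eq_Ioi (zero_le_one (α := ℝ)), integrableOn_union]
  constructor
  · have hg : IntegrableOn (fun x : ℝ => x ^ p) (Ioc (0:ℝ) 1) := by
      have := intervalIntegral.intervalIntegrable_rpow' (a := (0:ℝ)) (b := 1) hp
      rwa [intervalIntegrable_iff_integrableOn_Ioc_of_le zero_le_one] at this
    refine Integrable.mono' hg (hm.mono_set Ioc_subset_Ioi_self) ?_
    filter_upwards [ae_restrict_mem measurableSet_Ioc] with x hx
    simpa [Real.norm_eq_abs] using h1 x hx
  · have hg : IntegrableOn (fun x : ℝ => x ^ r) (Ioi (1:ℝ)) :=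
      integrableOn_Ioi_rpow_of_lt hr one_pos
    refine Integrable.mono' hg (hm.mono_set (Ioi_subset_Ioi zero_le_one)) ?_
    filter_upwards [ae_restrict_mem measurableSet_Ioi] with x hx
    simpa [Real.norm_eq_abs] using h2 x hx

variable {α : ℝ} (hα1 : 1 < α) (hα2 : α < 2)

section
include hα1 hα2

lemma hInt2 : IntegrableOn (fun x : ℝ => Real.exp (-x) * x ^ (1 - α)) (Ioi (0:ℝ)) := by
  have := Real.GammaIntegral_convergent (s := 2 - α) (by linarith)
  simpa [show (2 - α) - 1 = 1 - α by ring] using this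

lemma intA : ∫ x in Ioi (0:ℝ), Real.exp (-x) * x ^ (1 - α) = Real.Gamma (2 - α) := by
  rw [Real.Gamma_eq_integral (by linarith : (0:ℝ) < 2 - α)]
  simp [show (2 - α) - 1 = 1 - α by ring]

lemma meas1 : AEStronglyMeasurable (fun x : ℝ => (1 - Real.exp (-x)) * x ^ (-α))
    (volume.restrict (Ioi 0)) := by
  refine ContinuousOn.aestronglyMeasurable ?_ measurableSet_Ioi
  exact (Continuous.continuousOn (by fun_prop)).mul
    (continuousOn_id.rpow_const fun x hx => Or.inl (ne_of_gt hx))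

lemma hInt1 : IntegrableOn (fun x : ℝ => (1 - Real.exp (-x)) * x ^ (-α)) (Ioi (0:ℝ)) := by
  refine integrableOn_of_bounds (p := 1 - α) (r := -α) (by linarith) (by linarith)
    (meas1 hα1 hα2) ?_ ?_
  · intro x hx
    have hx0 : 0 < x := hx.1
    have hnn : 0 ≤ x ^ (-α) := Real.rpow_nonneg hx0.le _
    rw [abs_of_nonneg (mul_nonneg (one_sub_exp_neg_nonneg x hx0.le) hnn),
      show (1:ℝ) - α = 1 + (-α) by ring, Real.rpow_add hx0, Real.rpow_one]
    exact mul_le_mul_of_nonneg_right (one_sub_exp_neg_le x hx0.le) hnn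
  · intro x hx
    have hx0 : (0:ℝ) < x := lt_trans one_pos hx
    have hnn : 0 ≤ x ^ (-α) := Real.rpow_nonneg hx0.le _
    rw [abs_of_nonneg (mul_nonneg (one_sub_exp_neg_nonneg x hx0.le) hnn)]
    nlinarith [Real.exp_pos (-x), one_sub_exp_neg_nonneg x hx0.le]

lemma meas0 : AEStronglyMeasurable (fun x : ℝ => (Real.exp (-x) - 1 + x) * x ^ (-(1 + α)))
    (volume.restrict (Ioi 0)) := by
  refine ContinuousOn.aestronglyMeasurable ?_ measurableSet_Ioi
  exact (Continuous.continuousOn (by fun_prop)).mul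
    (continuousOn_id.rpow_const fun x hx => Or.inl (ne_of_gt hx))

lemma hInt0 : IntegrableOn (fun x : ℝ => (Real.exp (-x) - 1 + x) * x ^ (-(1 + α)))
    (Ioi (0:ℝ)) := by
  refine integrableOn_of_bounds (p := 1 - α) (r := -α) (by linarith) (by linarith)
    (meas0 hα1 hα2) ?_ ?_
  · intro x hx
    have hx0 : 0 < x := hx.1
    have hnn : 0 ≤ x ^ (-(1 + α)) := Real.rpow_nonneg hx0.le _
    rw [abs_of_nonneg (mul_nonneg (comp_nonneg x) hnn),
      show (1:ℝ) - α = 2 + (-(1 + α)) by ring, Real.rpow_add hx0,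
      show ((2:ℝ) : ℝ) = ((2:ℕ) : ℝ) by norm_num, Real.rpow_natCast]
    exact mul_le_mul_of_nonneg_right (comp_le_sq x hx0.le) hnn
  · intro x hx
    have hx0 : (0:ℝ) < x := lt_trans one_pos hx
    have hnn : 0 ≤ x ^ (-(1 + α)) := Real.rpow_nonneg hx0.le _
    rw [abs_of_nonneg (mul_nonneg (comp_nonneg x) hnn),
      show -α = 1 + (-(1 + α)) by ring, Real.rpow_add hx0, Real.rpow_one]
    exact mul_le_mul_of_nonneg_right (comp_le_self x hx0.le) hnn

lemma partsB : ∫ x in Ioi (0:ℝ), (1 - Real.exp (-x)) * x ^ (-α)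
    = Real.Gamma (2 - α) / (α - 1) := by
  have hne : (1:ℝ) - α ≠ 0 := by linarith
  have hu : ∀ x ∈ Ioi (0:ℝ), HasDerivAt (fun y : ℝ => 1 - Real.exp (-y)) (Real.exp (-x)) x := by
    intro x _
    have h := ((Real.hasDerivAt_exp (-x)).comp x (hasDerivAt_neg x)).const_sub 1
    simpa using h
  have hv : ∀ x ∈ Ioi (0:ℝ), HasDerivAt (fun y : ℝ => y ^ (1 - α) / (1 - α)) (x ^ (-α)) x := by
    intro x hx
    have h := (Real.hasDerivAt_rpow_const (p := 1 - α) (Or.inl (ne_of_gt hx))).div_const (1 - α)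
    have e : (1 - α) * x ^ (1 - α - 1) / (1 - α) = x ^ (-α) := by
      rw [show (1:ℝ) - α - 1 = -α by ring]; field_simp
    rwa [e] at h
  have huv' : IntegrableOn ((fun y : ℝ => 1 - Real.exp (-y)) * fun y : ℝ => y ^ (-α))
      (Ioi (0:ℝ)) := hInt1 hα1 hα2
  have hu'v : IntegrableOn ((fun x : ℝ => Real.exp (-x)) * fun y : ℝ => y ^ (1 - α) / (1 - α))
      (Ioi (0:ℝ)) := by
    have h := (hInt2 hα1 hα2).div_const (1 - α)
    refine h.congr (Filter.Eventually.of_forall fun x => ?_)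
    simp [Pi.mul_apply, mul_div_assoc]
  have h_zero : Tendsto ((fun y : ℝ => 1 - Real.exp (-y)) * fun y : ℝ => y ^ (1 - α) / (1 - α))
      (nhdsWithin 0 (Ioi 0)) (nhds 0) := by
    refine squeeze_zero_norm' (a := fun x : ℝ => x ^ (2 - α) / |1 - α|) ?_ ?_
    · filter_upwards [self_mem_nhdsWithin] with x (hx : (0:ℝ) < x)
      have hnn : 0 ≤ x ^ (1 - α) := Real.rpow_nonneg hx.le _
      rw [Pi.mul_apply, norm_mul, norm_div, Real.norm_eq_abs, Real.norm_eq_abs, Real.norm_eq_abs,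
        abs_of_nonneg (one_sub_exp_neg_nonneg x hx.le), abs_of_nonneg hnn,
        show (2:ℝ) - α = 1 + (1 - α) by ring, Real.rpow_add hx, Real.rpow_one, mul_div_assoc]
      exact mul_le_mul_of_nonneg_right (one_sub_exp_neg_le x hx.le)
        (by positivity)
    · have h1 : Tendsto (fun x : ℝ => x ^ (2 - α)) (nhdsWithin 0 (Ioi 0)) (nhds 0) := by
        have hc : ContinuousAt (fun x : ℝ => x ^ (2 - α)) 0 :=
          Real.continuousAt_rpow_const 0 (2 - α) (Or.inr (by linarith))
        have h := hc.tendsto.mono_left (nhdsWithin_le_nhds (s := Ioi (0:ℝ)))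
        simpa [Real.zero_rpow (show (2:ℝ) - α ≠ 0 by linarith)] using h
      simpa using h1.div_const |1 - α|
  have h_infty : Tendsto ((fun y : ℝ => 1 - Real.exp (-y)) * fun y : ℝ => y ^ (1 - α) / (1 - α))
      atTop (nhds 0) := by
    have h1 : Tendsto (fun y : ℝ => 1 - Real.exp (-y)) atTop (nhds 1) := by
      simpa using (Real.tendsto_exp_neg_atTop_nhds_zero).const_sub 1
    have h2 : Tendsto (fun y : ℝ => y ^ (1 - α) / (1 - α)) atTop (nhds 0) := by
      have := (tendsto_rpow_neg_atTop (y := α - 1) (by linarith)).div_const (1 - α)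
      simpa [show -(α - 1) = 1 - α by ring] using this
    have h3 := h1.mul h2
    rw [mul_zero] at h3
    exact h3
  have key := MeasureTheory.integral_Ioi_mul_deriv_eq_deriv_mul hu hv huv' hu'v h_zero h_infty
  rw [key]
  have : ∫ x in Ioi (0:ℝ), Real.exp (-x) * (x ^ (1 - α) / (1 - α))
      = Real.Gamma (2 - α) / (1 - α) := by
    rw [← intA hα1 hα2, ← integral_div]
    congr 1; ext x; rw [mul_div_assoc]
  rw [this, show (1:ℝ) - α = -(α - 1) by ring, div_neg]
  ring


lemma partsC : ∫ x in Ioi (0:ℝ), (Real.exp (-x) - 1 + x) * x ^ (-(1 + α))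
    = Real.Gamma (2 - α) / (α * (α - 1)) := by
  have hα0 : (0:ℝ) < α := by linarith
  have hu : ∀ x ∈ Ioi (0:ℝ),
      HasDerivAt (fun y : ℝ => Real.exp (-y) - 1 + y) (1 - Real.exp (-x)) x := by
    intro x _
    have h := (((Real.hasDerivAt_exp (-x)).comp x (hasDerivAt_neg x)).sub_const 1).add
      (hasDerivAt_id x)
    rw [show 1 - Real.exp (-x) = Real.exp (-x) * -1 + 1 by ring]
    exact h
  have hv : ∀ x ∈ Ioi (0:ℝ),
      HasDerivAt (fun y : ℝ => y ^ (-α) / (-α)) (x ^ (-(1 + α))) x := by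
    intro x hx
    have h := (Real.hasDerivAt_rpow_const (p := -α) (Or.inl (ne_of_gt hx))).div_const (-α)
    have e : -α * x ^ (-α - 1) / (-α) = x ^ (-(1 + α)) := by
      rw [show -α - 1 = -(1 + α) by ring]
      field_simp
    rwa [e] at h
  have huv' : IntegrableOn ((fun y : ℝ => Real.exp (-y) - 1 + y) * fun y : ℝ => y ^ (-(1 + α)))
      (Ioi (0:ℝ)) := hInt0 hα1 hα2
  have hu'v : IntegrableOn ((fun x : ℝ => 1 - Real.exp (-x)) * fun y : ℝ => y ^ (-α) / (-α))
      (Ioi (0:ℝ)) := by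
    have h := (hInt1 hα1 hα2).div_const (-α)
    refine h.congr (Filter.Eventually.of_forall fun x => ?_)
    simp [Pi.mul_apply, mul_div_assoc]
  have h_zero : Tendsto ((fun y : ℝ => Real.exp (-y) - 1 + y) * fun y : ℝ => y ^ (-α) / (-α))
      (nhdsWithin 0 (Ioi 0)) (nhds 0) := by
    refine squeeze_zero_norm' (a := fun x : ℝ => x ^ (2 - α) / α) ?_ ?_
    · filter_upwards [self_mem_nhdsWithin] with x (hx : (0:ℝ) < x)
      have hnn : 0 ≤ x ^ (-α) := Real.rpow_nonneg hx.le _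
      rw [Pi.mul_apply, norm_mul, norm_div, Real.norm_eq_abs, Real.norm_eq_abs, Real.norm_eq_abs,
        abs_of_nonneg (comp_nonneg x), abs_of_nonneg hnn, abs_neg, abs_of_pos hα0,
        show (2:ℝ) - α = 2 + (-α) by ring, Real.rpow_add hx,
        show ((2:ℝ) : ℝ) = ((2:ℕ) : ℝ) by norm_num, Real.rpow_natCast, mul_div_assoc]
      exact mul_le_mul_of_nonneg_right (comp_le_sq x hx.le) (by positivity)
    · have h1 : Tendsto (fun x : ℝ => x ^ (2 - α)) (nhdsWithin 0 (Ioi 0)) (nhds 0) := by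
        have hc : ContinuousAt (fun x : ℝ => x ^ (2 - α)) 0 :=
          Real.continuousAt_rpow_const 0 (2 - α) (Or.inr (by linarith))
        have h := hc.tendsto.mono_left (nhdsWithin_le_nhds (s := Ioi (0:ℝ)))
        simpa [Real.zero_rpow (show (2:ℝ) - α ≠ 0 by linarith)] using h
      simpa using h1.div_const α
  have h_infty : Tendsto ((fun y : ℝ => Real.exp (-y) - 1 + y) * fun y : ℝ => y ^ (-α) / (-α))
      atTop (nhds 0) := by
    refine squeeze_zero_norm' (a := fun x : ℝ => x ^ (1 - α) / α) ?_ ?_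
    · filter_upwards [Ioi_mem_atTop (0:ℝ)] with x (hx : (0:ℝ) < x)
      have hnn : 0 ≤ x ^ (-α) := Real.rpow_nonneg hx.le _
      rw [Pi.mul_apply, norm_mul, norm_div, Real.norm_eq_abs, Real.norm_eq_abs, Real.norm_eq_abs,
        abs_of_nonneg (comp_nonneg x), abs_of_nonneg hnn, abs_neg, abs_of_pos hα0,
        show (1:ℝ) - α = 1 + (-α) by ring, Real.rpow_add hx, Real.rpow_one, mul_div_assoc]
      exact mul_le_mul_of_nonneg_right (comp_le_self x hx.le) (by positivity)
    · have := (tendsto_rpow_neg_atTop (y := α - 1) (by linarith)).div_const α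
      simpa [show -(α - 1) = 1 - α by ring] using this
  have key := MeasureTheory.integral_Ioi_mul_deriv_eq_deriv_mul hu hv huv' hu'v h_zero h_infty
  rw [key]
  have h2 : ∫ x in Ioi (0:ℝ), (1 - Real.exp (-x)) * (x ^ (-α) / (-α))
      = Real.Gamma (2 - α) / (α - 1) / (-α) := by
    rw [← partsB hα1 hα2, ← integral_div]
    congr 1; ext x; rw [mul_div_assoc]
  rw [h2, div_div, show (α - 1) * (-α) = -(α * (α - 1)) by ring, div_neg]
  ring

lemma Gamma_neg_eq : Real.Gamma (-α) = Real.Gamma (2 - α) / (α * (α - 1)) := by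
  have h1 : Real.Gamma (-α + 1) = -α * Real.Gamma (-α) :=
    Real.Gamma_add_one (neg_ne_zero.mpr (by linarith))
  have h2 : Real.Gamma ((1 - α) + 1) = (1 - α) * Real.Gamma (1 - α) :=
    Real.Gamma_add_one (sub_ne_zero_of_ne (by linarith))
  rw [show -α + 1 = 1 - α by ring] at h1
  rw [show (1 - α) + 1 = 2 - α by ring, h1] at h2
  rw [h2]
  have hα0 : α ≠ 0 := by linarith
  have hne1 : α - 1 ≠ 0 := by linarith
  field_simp
  ring

lemma intC : ∫ x in Ioi (0:ℝ), (Real.exp (-x) - 1 + x) * x ^ (-(1 + α)) = Real.Gamma (-α) := by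
  rw [partsC hα1 hα2, Gamma_neg_eq hα1 hα2]

lemma intScaled {q : ℝ} (hq : 0 < q) :
    ∫ x in Ioi (0:ℝ), (Real.exp (-(q * x)) - 1 + q * x) * x ^ (-(1 + α))
      = q ^ α * Real.Gamma (-α) := by
  have hcomp := MeasureTheory.integral_comp_mul_left_Ioi
    (fun t : ℝ => (Real.exp (-t) - 1 + t) * t ^ (-(1 + α))) 0 hq
  rw [mul_zero] at hcomp
  have heq : EqOn (fun x : ℝ => (Real.exp (-(q * x)) - 1 + q * x) * x ^ (-(1 + α)))
      (fun x : ℝ => q ^ (1 + α) *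
        ((Real.exp (-(q * x)) - 1 + q * x) * (q * x) ^ (-(1 + α)))) (Ioi 0) := by
    intro x hx
    have hx0 : (0:ℝ) < x := hx
    have hne : q ^ (1 + α) ≠ 0 := ne_of_gt (Real.rpow_pos_of_pos hq _)
    simp only
    rw [Real.mul_rpow hq.le hx0.le, Real.rpow_neg hq.le (1 + α)]
    field_simp
  rw [setIntegral_congr_fun measurableSet_Ioi heq, MeasureTheory.integral_const_mul, hcomp,
    intC hα1 hα2, smul_eq_mul]
  rw [show (1:ℝ) + α = α + 1 by ring, Real.rpow_add hq, Real.rpow_one]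
  field_simp

end

end Stmt0Aux



/-- For `α ∈ (1,2)` and `q ≥ 0`,
`∫₀^∞ (e^{-qζ} - 1 + qζ) · (-1/(cos(πα/2)·Γ(-α)·ζ^{1+α})) dζ = -q^α / cos(πα/2)`. -/
theorem stmt0 (α q : ℝ) (hα : α ∈ Set.Ioo (1:ℝ) 2) (hq : 0 ≤ q) :
    ∫ ζ in Set.Ioi (0:ℝ),
      (Real.exp (-q * ζ) - 1 + q * ζ) *
        (-1 / (Real.cos (π * α / 2) * Real.Gamma (-α) * ζ ^ (1 + α))) =
      -q ^ α / Real.cos (π * α / 2) := by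
  obtain ⟨hα1, hα2⟩ := hα
  rcases eq_or_lt_of_le hq with rfl | hq'
  · simp [Real.zero_rpow (show α ≠ 0 by linarith)]
  · have hC : Real.cos (π * α / 2) < 0 :=
      Real.cos_neg_of_pi_div_two_lt_of_lt (by nlinarith [Real.pi_pos]) (by nlinarith [Real.pi_pos])
    have hCne : Real.cos (π * α / 2) ≠ 0 := ne_of_lt hC
    have hG : 0 < Real.Gamma (-α) := by
      rw [Stmt0Aux.Gamma_neg_eq hα1 hα2]
      exact div_pos (Real.Gamma_pos_of_pos (by linarith)) (by nlinarith)
    have hGne : Real.Gamma (-α) ≠ 0 := ne_of_gt hG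
    have heq : Set.EqOn
        (fun ζ : ℝ => (Real.exp (-q * ζ) - 1 + q * ζ) *
          (-1 / (Real.cos (π * α / 2) * Real.Gamma (-α) * ζ ^ (1 + α))))
        (fun ζ : ℝ => (-1 / (Real.cos (π * α / 2) * Real.Gamma (-α))) *
          ((Real.exp (-(q * ζ)) - 1 + q * ζ) * ζ ^ (-(1 + α)))) (Set.Ioi 0) := by
      intro ζ hζ
      have hζ0 : (0:ℝ) < ζ := hζ
      have hz : ζ ^ (1 + α) ≠ 0 := ne_of_gt (Real.rpow_pos_of_pos hζ0 _)
      simp only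
      rw [Real.rpow_neg hζ0.le, neg_mul]
      field_simp
    rw [MeasureTheory.setIntegral_congr_fun measurableSet_Ioi heq,
      MeasureTheory.integral_const_mul, Stmt0Aux.intScaled hα1 hα2 hq']
    field_simp
end

section
/- Let a > 0, b, r₀ ≥ 0, and let v_α : [0,∞) → [0,∞) be defined for α ∈ (1,2] as the inverse of f_α(t) = ∫₀^t dx/(1-Ψ_α(x)) on [0, x₀(α)), where Ψ_α(q) = aq + (σ²/2)q² - (σ_Z^α/cos(πα/2))q^α and x₀(α) is the root of Ψ_α = 1. If 1 < α₁ ≤ α₂ ≤ 2 then v_{α₁}(t) ≤ v_{α₂}(t) for all t ≥ 0; consequently the bond price B(0,T) = exp(-r₀ v_α(T) - ab∫₀^T v_α(s) ds) is nonincreasing in α. -/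
open Real Set MeasureTheory

/-- Monotonicity in `α` of the function `v_α` solving `f_α(v_α(t)) = t`, and hence
the bond price `B(0,T) = exp(-r₀ v_α(T) - ab ∫₀^T v_α)` is nonincreasing in `α`. -/
theorem stmt18 (a b σ σZ r₀ : ℝ) (ha : 0 < a) (hb : 0 ≤ b) (hσ : 0 ≤ σ) (hσZ : 0 < σZ)
    (hr₀ : 0 ≤ r₀)
    (Ψ : ℝ → ℝ → ℝ)
    (hΨ : ∀ α ∈ Set.Ioc (1:ℝ) 2, ∀ q,
      Ψ α q = a * q + σ ^ 2 / 2 * q ^ 2 - σZ ^ α / Real.cos (π * α / 2) * q ^ α)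
    (x₀ : ℝ → ℝ)
    (hx₀ : ∀ α ∈ Set.Ioc (1:ℝ) 2, 0 < x₀ α ∧ Ψ α (x₀ α) = 1)
    (v : ℝ → ℝ → ℝ)
    (hvcont : ∀ α ∈ Set.Ioc (1:ℝ) 2, ContinuousOn (v α) (Set.Ici 0))
    (hv : ∀ α ∈ Set.Ioc (1:ℝ) 2, ∀ t ≥ (0:ℝ),
      v α t ∈ Set.Ico 0 (x₀ α) ∧ (∫ x in (0:ℝ)..(v α t), 1 / (1 - Ψ α x)) = t) :
    ∀ α₁ α₂ : ℝ, 1 < α₁ → α₁ ≤ α₂ → α₂ ≤ 2 →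
      (∀ t ≥ (0:ℝ), v α₁ t ≤ v α₂ t) ∧
      (∀ T ≥ (0:ℝ),
        Real.exp (-r₀ * v α₂ T - a * b * ∫ s in (0:ℝ)..T, v α₂ s) ≤
          Real.exp (-r₀ * v α₁ T - a * b * ∫ s in (0:ℝ)..T, v α₁ s)) := by
  intro α₁ α₂ hα1 h12 h22
  have hα₁ : α₁ ∈ Set.Ioc (1:ℝ) 2 := ⟨hα1, h12.trans h22⟩
  have hα₂ : α₂ ∈ Set.Ioc (1:ℝ) 2 := ⟨hα1.trans_le h12, h22⟩
  have hπ := Real.pi_pos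
  -- cos (π α / 2) < 0 on (1,2]
  have hcos : ∀ α ∈ Set.Ioc (1:ℝ) 2, Real.cos (π * α / 2) < 0 := by
    rintro α ⟨h1, h2⟩
    apply Real.cos_neg_of_pi_div_two_lt_of_lt
    · nlinarith
    · nlinarith
  -- continuity of Ψ α
  have hΨcont : ∀ α ∈ Set.Ioc (1:ℝ) 2, Continuous (Ψ α) := by
    intro α hα
    have heq : Ψ α = fun q : ℝ =>
        a * q + σ ^ 2 / 2 * q ^ 2 - σZ ^ α / Real.cos (π * α / 2) * q ^ α :=
      funext (hΨ α hα)
    rw [heq]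
    exact ((continuous_const.mul continuous_id).add
      (continuous_const.mul (continuous_pow 2))).sub
      (continuous_const.mul (Real.continuous_rpow_const (by linarith [hα.1])))
  -- nonnegativity of Ψ α on [0,∞)
  have hΨ0 : ∀ α ∈ Set.Ioc (1:ℝ) 2, ∀ x : ℝ, 0 ≤ x → 0 ≤ Ψ α x := by
    intro α hα x hx
    rw [hΨ α hα]
    have hc := hcos α hα
    have h1 : σZ ^ α / Real.cos (π * α / 2) ≤ 0 :=
      div_nonpos_of_nonneg_of_nonpos (Real.rpow_nonneg hσZ.le α) hc.le
    have h2 : (0:ℝ) ≤ x ^ α := Real.rpow_nonneg hx α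
    nlinarith [mul_nonneg (neg_nonneg.2 h1) h2, mul_nonneg ha.le hx, sq_nonneg σ, sq_nonneg x,
      mul_nonneg (sq_nonneg σ) (sq_nonneg x)]
  -- strict monotonicity of Ψ α in x
  have hΨmonox : ∀ α ∈ Set.Ioc (1:ℝ) 2, ∀ x y : ℝ, 0 ≤ x → x < y → Ψ α x < Ψ α y := by
    intro α hα x y hx hxy
    rw [hΨ α hα, hΨ α hα]
    have hc := hcos α hα
    have hrp : x ^ α ≤ y ^ α := Real.rpow_le_rpow hx hxy.le (by linarith [hα.1])
    have hneg : σZ ^ α / Real.cos (π * α / 2) ≤ 0 :=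
      div_nonpos_of_nonneg_of_nonpos (Real.rpow_nonneg hσZ.le α) hc.le
    have h3 : 0 ≤ (-(σZ ^ α / Real.cos (π * α / 2))) * (y ^ α - x ^ α) :=
      mul_nonneg (neg_nonneg.2 hneg) (sub_nonneg.2 hrp)
    have h4 : x ^ 2 ≤ y ^ 2 := by nlinarith
    nlinarith [mul_pos ha (sub_pos.2 hxy), sq_nonneg σ,
      mul_nonneg (sq_nonneg σ) (sub_nonneg.2 h4)]
  -- Ψ α < 1 below x₀ α
  have hΨlt1 : ∀ α ∈ Set.Ioc (1:ℝ) 2, ∀ x : ℝ, 0 ≤ x → x < x₀ α → Ψ α x < 1 := by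
    intro α hα x hx hxx
    have h := hΨmonox α hα x (x₀ α) hx hxx
    rw [(hx₀ α hα).2] at h
    exact h
  -- σZ * x₀ α ≤ 1
  have hσZx₀le : ∀ α ∈ Set.Ioc (1:ℝ) 2, σZ * x₀ α ≤ 1 := by
    intro α hα
    obtain ⟨hx0pos, hx0eq⟩ := hx₀ α hα
    rw [hΨ α hα] at hx0eq
    have hc := hcos α hα
    have hcpos : 0 < -Real.cos (π * α / 2) := by linarith
    by_contra hgt
    push_neg at hgt
    have h1 : 1 < (σZ * x₀ α) ^ α :=
      (Real.one_lt_rpow_iff_of_pos (by positivity)).2 (Or.inl ⟨hgt, by linarith [hα.1]⟩)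
    have hmul : (σZ * x₀ α) ^ α = σZ ^ α * (x₀ α) ^ α := Real.mul_rpow hσZ.le hx0pos.le
    have hrw : σZ ^ α / Real.cos (π * α / 2) * (x₀ α) ^ α
        = -(σZ ^ α * (x₀ α) ^ α / (-Real.cos (π * α / 2))) := by
      field_simp
    rw [hrw] at hx0eq
    have hax : 0 < a * x₀ α := mul_pos ha hx0pos
    have hsx : 0 ≤ σ ^ 2 / 2 * (x₀ α) ^ 2 := by positivity
    -- from the equation, σZ^α x₀^α / (-cos) ≤ 1
    have h4 : σZ ^ α * (x₀ α) ^ α / (-Real.cos (π * α / 2)) ≤ 1 := by linarith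
    have h5 : σZ ^ α * (x₀ α) ^ α ≤ -Real.cos (π * α / 2) := by
      exact (div_le_one hcpos).1 h4
    have h6 : -Real.cos (π * α / 2) ≤ 1 := by nlinarith [Real.neg_one_le_cos (π * α / 2)]
    rw [hmul] at h1
    linarith
  -- Ψ is nonincreasing in α when σZ x ≤ 1
  have hΨαmono : ∀ x : ℝ, 0 ≤ x → σZ * x ≤ 1 → Ψ α₂ x ≤ Ψ α₁ x := by
    intro x hx hx1
    rw [hΨ α₁ hα₁, hΨ α₂ hα₂]
    have hc1 := hcos α₁ hα₁
    have hc2 := hcos α₂ hα₂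
    have hc1pos : 0 < -Real.cos (π * α₁ / 2) := by linarith
    have hc2pos : 0 < -Real.cos (π * α₂ / 2) := by linarith
    have hcle : -Real.cos (π * α₁ / 2) ≤ -Real.cos (π * α₂ / 2) := by
      have := Real.cos_le_cos_of_nonneg_of_le_pi (x := π * α₁ / 2) (y := π * α₂ / 2)
        (by nlinarith [hα₁.1]) (by nlinarith [hα₂.2]) (by nlinarith)
      linarith
    set u := σZ * x with hu
    have hu0 : 0 ≤ u := mul_nonneg hσZ.le hx
    have hupow : u ^ α₂ ≤ u ^ α₁ := by
      rcases eq_or_lt_of_le hu0 with h | h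
      · rw [← h, Real.zero_rpow (by linarith [hα₁.1] : α₁ ≠ 0),
          Real.zero_rpow (by linarith [hα₂.1] : α₂ ≠ 0)]
      · exact Real.rpow_le_rpow_of_exponent_ge h hx1 h12
    have hdiv : u ^ α₂ / (-Real.cos (π * α₂ / 2)) ≤ u ^ α₁ / (-Real.cos (π * α₁ / 2)) :=
      div_le_div₀ (Real.rpow_nonneg hu0 α₁) hupow hc1pos hcle
    have hrw1 : σZ ^ α₁ / Real.cos (π * α₁ / 2) * x ^ α₁
        = -(u ^ α₁ / (-Real.cos (π * α₁ / 2))) := by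
      rw [hu, Real.mul_rpow hσZ.le hx]; field_simp
    have hrw2 : σZ ^ α₂ / Real.cos (π * α₂ / 2) * x ^ α₂
        = -(u ^ α₂ / (-Real.cos (π * α₂ / 2))) := by
      rw [hu, Real.mul_rpow hσZ.le hx]; field_simp
    rw [hrw1, hrw2]
    linarith
  -- main monotonicity claim
  have key : ∀ t ≥ (0:ℝ), v α₁ t ≤ v α₂ t := by
    intro t ht
    obtain ⟨⟨hV₁0, hV₁x⟩, hI₁⟩ := hv α₁ hα₁ t ht
    obtain ⟨⟨hV₂0, hV₂x⟩, hI₂⟩ := hv α₂ hα₂ t ht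
    by_contra hcon
    push_neg at hcon
    set V₁ := v α₁ t with hV₁
    set V₂ := v α₂ t with hV₂
    -- pointwise facts on [0, V₁]
    have hfacts : ∀ x ∈ Icc (0:ℝ) V₁, 0 ≤ Ψ α₂ x ∧ Ψ α₂ x ≤ Ψ α₁ x ∧ Ψ α₁ x < 1 := by
      rintro x ⟨hx0, hxV⟩
      have hxx₀ : x < x₀ α₁ := lt_of_le_of_lt hxV hV₁x
      have h1 : Ψ α₁ x < 1 := hΨlt1 α₁ hα₁ x hx0 hxx₀
      have hσx : σZ * x ≤ 1 := by
        have h2 : σZ * x ≤ σZ * x₀ α₁ := by nlinarith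
        linarith [hσZx₀le α₁ hα₁]
      exact ⟨hΨ0 α₂ hα₂ x hx0, hΨαmono x hx0 hσx, h1⟩
    -- continuity of the integrands
    have hg₁cont : ContinuousOn (fun x => 1 / (1 - Ψ α₁ x)) (Icc 0 V₁) := by
      apply ContinuousOn.div continuousOn_const
        ((continuous_const.sub (hΨcont α₁ hα₁)).continuousOn)
      intro x hx
      have := (hfacts x hx).2.2
      intro h; rw [Pi.sub_apply, sub_eq_zero] at h; exact absurd h.symm (ne_of_lt this)
    have hg₂cont : ContinuousOn (fun x => 1 / (1 - Ψ α₂ x)) (Icc 0 V₁) := by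
      apply ContinuousOn.div continuousOn_const
        ((continuous_const.sub (hΨcont α₂ hα₂)).continuousOn)
      intro x hx
      have h1 := (hfacts x hx).2.1
      have h2 := (hfacts x hx).2.2
      intro h; rw [Pi.sub_apply, sub_eq_zero] at h; exact absurd h.symm (ne_of_lt (lt_of_le_of_lt h1 h2))
    have huIcc : uIcc (0:ℝ) V₁ = Icc 0 V₁ := uIcc_of_le hV₁0
    have hint₁ : IntervalIntegrable (fun x => 1 / (1 - Ψ α₁ x)) volume 0 V₁ := by
      apply ContinuousOn.intervalIntegrable; rw [huIcc]; exact hg₁cont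
    have hint₂ : IntervalIntegrable (fun x => 1 / (1 - Ψ α₂ x)) volume 0 V₁ := by
      apply ContinuousOn.intervalIntegrable; rw [huIcc]; exact hg₂cont
    have hint₂a : IntervalIntegrable (fun x => 1 / (1 - Ψ α₂ x)) volume 0 V₂ := by
      apply ContinuousOn.intervalIntegrable
      apply hg₂cont.mono
      rw [uIcc_of_le hV₂0]
      exact Icc_subset_Icc le_rfl hcon.le
    have hint₂b : IntervalIntegrable (fun x => 1 / (1 - Ψ α₂ x)) volume V₂ V₁ := by
      apply ContinuousOn.intervalIntegrable
      apply hg₂cont.mono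
      rw [uIcc_of_le hcon.le]
      exact Icc_subset_Icc hV₂0 le_rfl
    -- comparison of the two integrands on [0, V₁]
    have hle : (∫ x in (0:ℝ)..V₁, 1 / (1 - Ψ α₂ x)) ≤ ∫ x in (0:ℝ)..V₁, 1 / (1 - Ψ α₁ x) := by
      apply intervalIntegral.integral_mono_on hV₁0 hint₂ hint₁
      intro x hx
      obtain ⟨h0, hmono, hlt1⟩ := hfacts x hx
      apply one_div_le_one_div_of_le
      · linarith
      · linarith
    -- splitting the integral
    have hsplit : (∫ x in (0:ℝ)..V₂, 1 / (1 - Ψ α₂ x)) + (∫ x in V₂..V₁, 1 / (1 - Ψ α₂ x))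
        = ∫ x in (0:ℝ)..V₁, 1 / (1 - Ψ α₂ x) :=
      intervalIntegral.integral_add_adjacent_intervals hint₂a hint₂b
    -- lower bound on the extra piece
    have hconst : IntervalIntegrable (fun _ : ℝ => (1:ℝ)) volume V₂ V₁ :=
      intervalIntegrable_const
    have hlower : V₁ - V₂ ≤ ∫ x in V₂..V₁, 1 / (1 - Ψ α₂ x) := by
      have h := intervalIntegral.integral_mono_on hcon.le hconst hint₂b ?_
      · simpa using h
      · intro x hx
        have hx' : x ∈ Icc (0:ℝ) V₁ := ⟨le_trans hV₂0 hx.1, hx.2⟩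
        obtain ⟨h0, hmono, hlt1⟩ := hfacts x hx'
        rw [le_div_iff₀ (by linarith)]
        linarith
    linarith [hI₁, hI₂, hle, hsplit, hlower]
  refine ⟨key, ?_⟩
  intro T hT
  apply Real.exp_le_exp.2
  have h1' : r₀ * v α₁ T ≤ r₀ * v α₂ T := mul_le_mul_of_nonneg_left (key T hT) hr₀
  have h2' : (∫ s in (0:ℝ)..T, v α₁ s) ≤ ∫ s in (0:ℝ)..T, v α₂ s := by
    apply intervalIntegral.integral_mono_on hT
    · apply ContinuousOn.intervalIntegrable
      apply (hvcont α₁ hα₁).mono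
      rw [uIcc_of_le hT]
      exact Icc_subset_Ici_self
    · apply ContinuousOn.intervalIntegrable
      apply (hvcont α₂ hα₂).mono
      rw [uIcc_of_le hT]
      exact Icc_subset_Ici_self
    · intro x hx
      exact key x hx.1
  have h3' : a * b * (∫ s in (0:ℝ)..T, v α₁ s) ≤ a * b * ∫ s in (0:ℝ)..T, v α₂ s :=
    mul_le_mul_of_nonneg_left h2' (mul_nonneg ha.le hb)
  linarith
end
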